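/- Let A be a commutative ring with 1 such that for any two non-comparable prime ideals P, P' of A, the closures of {P} and {P'} in Spec A are disjoint. If moreover A is a pm-ring, then Spec A is completely normal in the specialization order sense: for any prime ideal P, any two prime ideals containing P are comparable. -/
import Mathlib


theorem stmt_15 {A : Type*} [CommRing A]
    (hwcn : ∀ p p' : PrimeSpectrum A, ¬ p.asIdeal ≤ p'.asIdeal → ¬ p'.asIdeal ≤ p.asIdeal →
      closure {p} ∩ closure {p'} = (∅ : Set (PrimeSpectrum A)))
    (hpm : ∀ P : Ideal A, P.IsPrime → ∃! M : Ideal A, M.IsMaximal ∧ P ≤ M) :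
    ∀ P Q Q' : Ideal A, P.IsPrime → Q.IsPrime → Q'.IsPrime →
      P ≤ Q → P ≤ Q' → Q ≤ Q' ∨ Q' ≤ Q := by
  intro P Q Q' hP hQ hQ' hPQ hPQ'
  by_contra h
  push_neg at h
  obtain ⟨h1, h2⟩ := h
  have hdisj := hwcn ⟨Q, hQ⟩ ⟨Q', hQ'⟩ h1 h2
  obtain ⟨M, hM, hQM⟩ := Q.exists_le_maximal hQ.ne_top
  obtain ⟨M', hM', hQM'⟩ := Q'.exists_le_maximal hQ'.ne_top
  obtain ⟨N, _, hNuniq⟩ := hpm P hP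
  have e1 : M = N := hNuniq M ⟨hM, hPQ.trans hQM⟩
  have e2 : M' = N := hNuniq M' ⟨hM', hPQ'.trans hQM'⟩
  have hmem : (⟨M, hM.isPrime⟩ : PrimeSpectrum A) ∈
      closure {(⟨Q, hQ⟩ : PrimeSpectrum A)} ∩ closure {(⟨Q', hQ'⟩ : PrimeSpectrum A)} := by
    constructor
    · exact (PrimeSpectrum.le_iff_mem_closure ⟨Q, hQ⟩ ⟨M, hM.isPrime⟩).mp hQM
    · exact (PrimeSpectrum.le_iff_mem_closure ⟨Q', hQ'⟩ ⟨M, hM.isPrime⟩).mp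
        (e2.trans e1.symm ▸ hQM')
  rw [hdisj] at hmem
  exact hmem
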